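/- (Check or Issue Lemma) Let bx ∈ ℕ and let τ = {(s₀,s₁) ∈ ℕ×ℕ | s₀ = s₁ + 1 ∨ s₁ = bx}. For every path π (i.e., π: ℕ → ℕ with (π(i),π(i+1)) ∈ τ for all i ∈ ℕ) and all i,k ∈ ℕ with i ≤ k, either π(i) ≥ π(k), or there exists j ∈ ℕ with i < j, j ≤ k, and π(j) = bx. -/
import Mathlib


/-- **Check or Issue Lemma.** For the Award Card Protocol state model with
`bx` boxes per card and transition relation
`τ = {(s₀, s₁) | s₀ = s₁ + 1 ∨ s₁ = bx}`: along any path `π`, for `i ≤ k`,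
either `π i ≥ π k` or some intermediate `j` with `i < j ≤ k` has
`π j = bx` (a new card was issued in between). -/
theorem check_or_issue (bx : ℕ) (π : ℕ → ℕ)
    (hpath : ∀ i : ℕ, (π i, π (i + 1)) ∈ { p : ℕ × ℕ | p.1 = p.2 + 1 ∨ p.2 = bx }) :
    ∀ i k : ℕ, i ≤ k →
      π i ≥ π k ∨ ∃ j : ℕ, i < j ∧ j ≤ k ∧ π j = bx := by
  intro i k
  induction k with
  | zero => intro h; have hi : i = 0 := Nat.le_zero.mp h; left; rw [hi]
  | succ n ih =>
    intro h
    rcases Nat.lt_or_ge i (n+1) with hi | hi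
    · have hin : i ≤ n := by omega
      rcases ih hin with hge | ⟨j, hj1, hj2, hj3⟩
      · rcases hpath n with h1 | h1
        · left; omega
        · right; exact ⟨n+1, by omega, le_refl _, h1⟩
      · right; exact ⟨j, hj1, by omega, hj3⟩
    · left; have : i = n + 1 := by omega
      simp [this]
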